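/- Let T be a monotone, constant-shift-commuting operator on functions S → ℝ, S finite nonempty, Jₙ = Tⁿ∘0. Then lim_{n→∞} min_s Jₙ(s)/n = sup_n min_s Jₙ(s)/n and lim_{n→∞} max_s Jₙ(s)/n = inf_n max_s Jₙ(s)/n (assuming these are finite), and consequently for every k ≥ 1: min_s Jₖ(s)/k ≤ lim_n min_s Jₙ(s)/n ≤ lim_n max_s Jₙ(s)/n ≤ max_s Jₖ(s)/k. -/

import Mathlib

section Aux

variable {S : Type*} [Fintype S] [Nonempty S]

lemma iter_mono (T : (S → ℝ) → (S → ℝ))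
    (hmono : ∀ W V : S → ℝ, (∀ s, V s ≤ W s) → ∀ s, T V s ≤ T W s) :
    ∀ (n : ℕ) (V W : S → ℝ), (∀ s, V s ≤ W s) → ∀ s, T^[n] V s ≤ T^[n] W s := by
  intro n
  induction n with
  | zero => intro V W h s; simpa using h s
  | succ n ih =>
    intro V W h s
    rw [Function.iterate_succ_apply', Function.iterate_succ_apply']
    exact hmono _ _ (ih V W h) s

lemma iter_shift (T : (S → ℝ) → (S → ℝ))
    (hshift : ∀ (J : S → ℝ) (d : ℝ), T (fun s => J s + d) = fun s => T J s + d) :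
    ∀ (n : ℕ) (V : S → ℝ) (d : ℝ),
      T^[n] (fun s => V s + d) = fun s => T^[n] V s + d := by
  intro n
  induction n with
  | zero => intro V d; rfl
  | succ n ih =>
    intro V d
    rw [Function.iterate_succ_apply', Function.iterate_succ_apply', ih, hshift]

end Aux

/-- Theorem 4 of the paper: for a monotone, constant-shift-commuting operator `T`
and `Jₙ = Tⁿ 0`, the normalized min values converge to their supremum, the
normalized max values converge to their infimum, and every iteration `k ≥ 1`
gives lower and upper bounds sandwiching the limits. -/
theorem dp_value_iteration_bounds {S : Type*} [Fintype S] [Nonempty S]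
    (T : (S → ℝ) → (S → ℝ))
    (hmono : ∀ W V : S → ℝ, (∀ s, V s ≤ W s) → ∀ s, T V s ≤ T W s)
    (hshift : ∀ (J : S → ℝ) (d : ℝ), T (fun s => J s + d) = fun s => T J s + d)
    (J : ℕ → S → ℝ)
    (hJ : ∀ n, J n = T^[n] (fun _ => 0))
    (hbddAbove : BddAbove (Set.range fun n : {n : ℕ // 1 ≤ n} =>
      Finset.univ.inf' Finset.univ_nonempty (J n) / n))
    (hbddBelow : BddBelow (Set.range fun n : {n : ℕ // 1 ≤ n} =>
      Finset.univ.sup' Finset.univ_nonempty (J n) / n)) :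
    Filter.Tendsto (fun n : ℕ => Finset.univ.inf' Finset.univ_nonempty (J n) / n)
        Filter.atTop
        (nhds (⨆ n : {n : ℕ // 1 ≤ n},
          Finset.univ.inf' Finset.univ_nonempty (J n) / n)) ∧
      Filter.Tendsto (fun n : ℕ => Finset.univ.sup' Finset.univ_nonempty (J n) / n)
        Filter.atTop
        (nhds (⨅ n : {n : ℕ // 1 ≤ n},
          Finset.univ.sup' Finset.univ_nonempty (J n) / n)) ∧
      ∀ k : ℕ, 1 ≤ k →
        Finset.univ.inf' Finset.univ_nonempty (J k) / k ≤
          (⨆ n : {n : ℕ // 1 ≤ n},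
            Finset.univ.inf' Finset.univ_nonempty (J n) / n) ∧
        (⨆ n : {n : ℕ // 1 ≤ n},
            Finset.univ.inf' Finset.univ_nonempty (J n) / n) ≤
          (⨅ n : {n : ℕ // 1 ≤ n},
            Finset.univ.sup' Finset.univ_nonempty (J n) / n) ∧
        (⨅ n : {n : ℕ // 1 ≤ n},
            Finset.univ.sup' Finset.univ_nonempty (J n) / n) ≤
          Finset.univ.sup' Finset.univ_nonempty (J k) / k := by
  classical
  set m : ℕ → ℝ := fun n => Finset.univ.inf' Finset.univ_nonempty (J n) with hm
  set M : ℕ → ℝ := fun n => Finset.univ.sup' Finset.univ_nonempty (J n) with hM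
  -- key additivity estimates
  have key : ∀ a b : ℕ, (∀ s, J a s + m b ≤ J (a + b) s) ∧
      (∀ s, J (a + b) s ≤ J a s + M b) := by
    intro a b
    have hJab : J (a + b) = T^[a] (J b) := by
      rw [hJ, hJ, Function.iterate_add_apply]
    have hlow : ∀ s, (fun _ : S => (0 : ℝ)) s + m b ≤ J b s := fun s => by
      simpa only [zero_add] using Finset.inf'_le (J b) (Finset.mem_univ s)
    have hhigh : ∀ s, J b s ≤ (fun _ : S => (0 : ℝ)) s + M b := fun s => by
      simpa only [zero_add] using Finset.le_sup' (J b) (Finset.mem_univ s)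
    constructor
    · intro s
      have h1 := iter_mono T hmono a _ _ hlow s
      rw [iter_shift T hshift] at h1
      simpa [hJab, hJ a] using h1
    · intro s
      have h1 := iter_mono T hmono a _ _ hhigh s
      rw [iter_shift T hshift] at h1
      simpa [hJab, hJ a] using h1
  have hsuper : ∀ a b : ℕ, m a + m b ≤ m (a + b) := by
    intro a b
    refine Finset.le_inf' _ _ fun s _ => ?_
    exact le_trans (add_le_add_left
      (Finset.inf'_le (J a) (Finset.mem_univ s)) _)
      ((key a b).1 s)
  have hsub : Subadditive M := by
    intro a b
    refine Finset.sup'_le _ _ fun s _ => ?_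
    exact le_trans ((key a b).2 s)
      (add_le_add_left (Finset.le_sup' (J a) (Finset.mem_univ s)) _)
  have hv : Subadditive (fun n => -(m n)) := by
    intro a b
    have := hsuper a b
    simp only []
    linarith
  -- translate ranges
  have hrangeM : (fun n : ℕ => M n / n) '' Set.Ici 1 =
      Set.range (fun n : {n : ℕ // 1 ≤ n} => M n / n) := by
    rw [Set.image_eq_range]
    rfl
  have hrangem : (fun n : ℕ => m n / n) '' Set.Ici 1 =
      Set.range (fun n : {n : ℕ // 1 ≤ n} => m n / n) := by
    rw [Set.image_eq_range]
    rfl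
  -- boundedness for Fekete
  have hbB := hbddBelow
  have hbA := hbddAbove
  obtain ⟨c, hc⟩ := hbB
  have hMbdd : BddBelow (Set.range fun n : ℕ => M n / n) := by
    refine ⟨min c 0, ?_⟩
    rintro x ⟨n, rfl⟩
    rcases Nat.eq_zero_or_pos n with rfl | hn
    · simp
    · exact le_trans (min_le_left _ _) (hc ⟨⟨n, hn⟩, rfl⟩)
  obtain ⟨d, hd⟩ := hbA
  have hvbdd : BddBelow (Set.range fun n : ℕ => -(m n) / n) := by
    refine ⟨min (-d) 0, ?_⟩
    rintro x ⟨n, rfl⟩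
    rcases Nat.eq_zero_or_pos n with rfl | hn
    · simp
    · show min (-d) 0 ≤ -(m n) / (n : ℝ)
      rw [neg_div]
      have h1 : m n / n ≤ d := hd ⟨⟨n, hn⟩, rfl⟩
      have h2 := min_le_left (-d) (0:ℝ)
      linarith
  -- Fekete for M
  have hMtend := hsub.tendsto_lim hMbdd
  have hMlim : hsub.lim = ⨅ n : {n : ℕ // 1 ≤ n}, M n / n := by
    rw [Subadditive.lim, iInf, hrangeM]
  -- Fekete for -m
  have hvtend := hv.tendsto_lim hvbdd
  have hvlim : hv.lim = -(⨆ n : {n : ℕ // 1 ≤ n}, m n / n) := by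
    rw [Subadditive.lim, iSup]
    have himg : (fun n : ℕ => -(m n) / n) '' Set.Ici 1 =
        -((fun n : ℕ => m n / n) '' Set.Ici 1) := by
      rw [← Set.image_neg_eq_neg, ← Set.image_comp]
      refine Set.image_congr fun n _ => ?_
      simp [neg_div]
    rw [himg, Real.sInf_def, neg_neg, hrangem]
  have hmtend : Filter.Tendsto (fun n : ℕ => m n / n) Filter.atTop
      (nhds (⨆ n : {n : ℕ // 1 ≤ n}, m n / n)) := by
    have := hvtend.neg
    rw [hvlim, neg_neg] at this
    refine this.congr fun n => ?_
    simp [neg_div]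
  rw [hMlim] at hMtend
  refine ⟨hmtend, hMtend, fun k hk => ?_⟩
  have hmid : (⨆ n : {n : ℕ // 1 ≤ n}, m n / n) ≤ ⨅ n : {n : ℕ // 1 ≤ n}, M n / n := by
    refine le_of_tendsto_of_tendsto' hmtend hMtend fun n => ?_
    rcases Nat.eq_zero_or_pos n with rfl | hn
    · simp
    · have : m n ≤ M n := by
        obtain ⟨s⟩ := (inferInstance : Nonempty S)
        exact le_trans (Finset.inf'_le _ (Finset.mem_univ s))
          (Finset.le_sup' _ (Finset.mem_univ s))
      exact div_le_div_of_nonneg_right this (by exact_mod_cast hn.le)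
  exact ⟨le_ciSup hbddAbove ⟨k, hk⟩, hmid, ciInf_le hbddBelow ⟨k, hk⟩⟩
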